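/- Let R = F2[x^{±1}, y^{±1}] with involution f ↦ f̄, and define the 4×3 matrices over R: σ_F with columns (1; x), (1; y), (1; 1) written as pairs of 2×1 blocks (i.e. σ_F = ((1 1 1),(x y 1)) stacked), and σ̃ = (X̃ Z̃) where X̃ has top block T = (0, x^{-1}y; 1, 0) and bottom block I_2, and Z̃ has top block (1 + x^{-1}; 1 + y^{-1}) and bottom block 0. Then σ̃†λ_2 σ̃ = σ_F†σ_F, where λ_2 = (0 I_2; I_2 0) and † is the transpose with x ↦ x^{-1}, y ↦ y^{-1} applied entrywise. -/

import Mathlib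

/-- The Laurent polynomial ring `F₂[x^{±1}, y^{±1}]` in two variables. -/
abbrev R2 : Type := AddMonoidAlgebra (ZMod 2) (Fin 2 → ℤ)

/-- The monomial `x^a y^b`. -/
noncomputable def m2 (a b : ℤ) : R2 := AddMonoidAlgebra.single ![a, b] 1

/-- The involution `f ↦ f̄` given by `x ↦ x⁻¹`, `y ↦ y⁻¹`. -/
noncomputable def bar2 : R2 ≃ₐ[ZMod 2] R2 :=
  AddMonoidAlgebra.domCongr (ZMod 2) (ZMod 2) (AddEquiv.neg (Fin 2 → ℤ))

/-- The matrix adjoint `A†`: transpose with the involution applied entrywise. -/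
noncomputable def adj {m n : Type*} (A : Matrix m n R2) : Matrix n m R2 :=
  (A.map bar2).transpose

lemma one_one : (1:R2)+1 = 0 := by
  rw [AddMonoidAlgebra.one_def, ← AddMonoidAlgebra.single_add]
  norm_num
  decide

lemma m2_mul (a b c d : ℤ) : m2 a b * m2 c d = m2 (a+c) (b+d) := by
  simp [m2, AddMonoidAlgebra.single_mul_single]

lemma m2_zero : m2 0 0 = 1 := by
  simp [m2, AddMonoidAlgebra.one_def]
  congr 1; ext i; fin_cases i <;> simp

lemma bar2_m2 (a b : ℤ) : bar2 (m2 a b) = m2 (-a) (-b) := by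
  simp [bar2, m2, AddMonoidAlgebra.domCongr_single]

/-- The 2D exact bosonization preserves all commutation relations: with
`σ_F = ((1 1 1); (x y 1))` and `σ̃ = (X̃ Z̃)`, `X̃ = ((0 x⁻¹y; 1 0); I₂)`,
`Z̃ = ((1+x⁻¹; 1+y⁻¹); 0)`, one has `σ̃† λ₂ σ̃ = σ_F† σ_F`. -/
theorem stmt_19
    (σF : Matrix (Fin 1 ⊕ Fin 1) (Fin 2 ⊕ Fin 1) R2)
    (hσF : σF = Matrix.fromBlocks !![1, 1] 1 !![m2 1 0, m2 0 1] 1)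
    (T : Matrix (Fin 2) (Fin 2) R2)
    (hT : T = !![0, m2 (-1) 1; 1, 0])
    (Ztop : Matrix (Fin 2) (Fin 1) R2)
    (hZtop : Ztop = !![1 + m2 (-1) 0; 1 + m2 0 (-1)])
    (σt : Matrix (Fin 2 ⊕ Fin 2) (Fin 2 ⊕ Fin 1) R2)
    (hσt : σt = Matrix.fromBlocks T Ztop 1 0)
    (lam2 : Matrix (Fin 2 ⊕ Fin 2) (Fin 2 ⊕ Fin 2) R2)
    (hlam2 : lam2 = Matrix.fromBlocks 0 1 1 0) :
    adj σt * lam2 * σt = adj σF * σF := by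
  subst hσF hT hZtop hσt hlam2
  ext i j
  rcases i with i | i <;> rcases j with j | j <;> fin_cases i <;> fin_cases j <;>
    simp [adj, Matrix.mul_apply, Fintype.sum_sum_type, Fin.sum_univ_succ,
      Matrix.fromBlocks, map_add, bar2_m2, m2_mul, Matrix.one_apply, m2_zero,
      CharTwo.add_self_eq_zero] <;>
    first
      | (rw [one_one]; simp)
      | simp [add_comm]
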